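/- An A-scoring rule whose scores satisfy s_1 < s_2 = ⋯ = s_m (i.e. k* = 1; an A-negative-plurality rule) is regret-free truth-telling if and only if n ≥ m − 1. -/

import Mathlib

open Function

/-- A preference: a bijection from positions (`0` = bottom/worst, `m-1` = top/best)
to alternatives.  `p k` is the alternative in the `(k+1)`-th position from the bottom. -/
abbrev Pref (m : ℕ) := Equiv.Perm (Fin m)

/-- A profile: one preference for each of the `n` agents. -/
abbrev Profile (n m : ℕ) := Fin n → Pref m

/-- `x` is strictly preferred to `y` under `p`. -/
def prefers {m : ℕ} (p : Pref m) (x y : Fin m) : Prop :=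
  p.symm y < p.symm x

instance {m : ℕ} (p : Pref m) (x y : Fin m) : Decidable (prefers p x y) :=
  inferInstanceAs (Decidable (p.symm y < p.symm x))

/-- `x` is the top (best) alternative of `p`. -/
def IsBest {m : ℕ} (p : Pref m) (x : Fin m) : Prop :=
  ∀ y, p.symm y ≤ p.symm x

instance {m : ℕ} (p : Pref m) (x : Fin m) : Decidable (IsBest p x) :=
  inferInstanceAs (Decidable (∀ y, p.symm y ≤ p.symm x))

/-- Regret-free truth-telling: whenever a misreport `Pi'` by agent `i` yields a strictly
better outcome, there is a subprofile of the others (a full profile `Pstar` agreeing with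
`P` at `i`) consistent with the observed outcome at which the misreport does strictly worse. -/
def RFTT {n m : ℕ} (f : Profile n m → Fin m) : Prop :=
  ∀ (i : Fin n) (P : Profile n m) (Pi' : Pref m),
    prefers (P i) (f (update P i Pi')) (f P) →
    ∃ Pstar : Profile n m, Pstar i = P i ∧ f Pstar = f P ∧
      prefers (P i) (f Pstar) (f (update Pstar i Pi'))

/-- Strategy-proofness: truth-telling yields a weakly better outcome. -/
def StrategyProof {n m : ℕ} (f : Profile n m → Fin m) : Prop :=
  ∀ (P : Profile n m) (i : Fin n) (Pi' : Pref m),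
    f P = f (update P i Pi') ∨ prefers (P i) (f P) (f (update P i Pi'))

/-- Tops-only: the outcome only depends on the agents' top alternatives. -/
def TopsOnly {n m : ℕ} (f : Profile n m → Fin m) : Prop :=
  ∀ P P' : Profile n m, (∀ i x, IsBest (P i) x ↔ IsBest (P' i) x) → f P = f P'

/-- Efficiency: no alternative is strictly preferred to the outcome by every agent. -/
def Efficient {n m : ℕ} (f : Profile n m → Fin m) : Prop :=
  ∀ P : Profile n m, ¬ ∃ y, ∀ i, prefers (P i) y (f P)

/-- Dictatorship: some agent always gets his top alternative. -/
def Dictatorial {n m : ℕ} (f : Profile n m → Fin m) : Prop :=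
  ∃ i : Fin n, ∀ P : Profile n m, IsBest (P i) (f P)

/-- Anonymity: invariance under permutations of the agents. -/
def Anonymous {n m : ℕ} (f : Profile n m → Fin m) : Prop :=
  ∀ (P : Profile n m) (σ : Equiv.Perm (Fin n)), f P = f (fun i => P (σ i))

/-- Neutrality: relabelling the alternatives relabels the outcome accordingly. -/
def Neutral {n m : ℕ} (f : Profile n m → Fin m) : Prop :=
  ∀ (P : Profile n m) (π : Equiv.Perm (Fin m)),
    π (f P) = f (fun i => (P i).trans π)

/-- The minimal position (`0`-indexed, from the bottom) of alternative `x` in profile `P`. -/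
noncomputable def minpos {n m : ℕ} (P : Profile n m) (x : Fin m) : ℕ :=
  ⨅ i : Fin n, ((P i).symm x : ℕ)

/-- The maxmin winners of profile `P`. -/
def MaxminSet {n m : ℕ} (P : Profile n m) : Set (Fin m) :=
  {x | ∀ y, minpos P y ≤ minpos P x}

/-- An `A`-maxmin rule: breaks ties among maxmin winners by a fixed strict linear order. -/
def AMaxmin {n m : ℕ} (f : Profile n m → Fin m) : Prop :=
  ∃ r : Fin m → Fin m → Prop, IsStrictTotalOrder (Fin m) r ∧
    ∀ P : Profile n m, f P ∈ MaxminSet P ∧ ∀ y ∈ MaxminSet P, y ≠ f P → r (f P) y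

/-- An `N`-maxmin rule: breaks ties among maxmin winners by a fixed agent's preference. -/
def NMaxmin {n m : ℕ} (f : Profile n m → Fin m) : Prop :=
  ∃ i : Fin n, ∀ P : Profile n m,
    f P ∈ MaxminSet P ∧ ∀ y ∈ MaxminSet P, y ≠ f P → prefers (P i) (f P) y

/-- The score of alternative `x` in profile `P`, for scores `s` (indexed by position
from the bottom). -/
noncomputable def score {n m : ℕ} (s : Fin m → ℝ) (P : Profile n m) (x : Fin m) : ℝ :=
  ∑ i : Fin n, s ((P i).symm x)

/-- The scoring winners of profile `P`. -/
def ScoreSet {n m : ℕ} (s : Fin m → ℝ) (P : Profile n m) : Set (Fin m) :=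
  {x | ∀ y, score s P y ≤ score s P x}

/-- An `A`-scoring rule: breaks ties among scoring winners by a fixed strict linear order. -/
def AScoring {n m : ℕ} (s : Fin m → ℝ) (f : Profile n m → Fin m) : Prop :=
  ∃ r : Fin m → Fin m → Prop, IsStrictTotalOrder (Fin m) r ∧
    ∀ P : Profile n m, f P ∈ ScoreSet s P ∧ ∀ y ∈ ScoreSet s P, y ≠ f P → r (f P) y

/-- An `N`-scoring rule: breaks ties among scoring winners by a fixed agent's preference. -/
def NScoring {n m : ℕ} (s : Fin m → ℝ) (f : Profile n m → Fin m) : Prop :=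
  ∃ i : Fin n, ∀ P : Profile n m,
    f P ∈ ScoreSet s P ∧ ∀ y ∈ ScoreSet s P, y ≠ f P → prefers (P i) (f P) y

/-- The number of agents preferring `a` to `b` in profile `P`. -/
def numPref {n m : ℕ} (P : Profile n m) (a b : Fin m) : ℕ :=
  (Finset.univ.filter fun i => prefers (P i) a b).card

/-- `a` is a Condorcet winner at `P`. -/
def CondorcetWinner {n m : ℕ} (P : Profile n m) (a : Fin m) : Prop :=
  ∀ b, b ≠ a → numPref P b a < numPref P a b

/-- Condorcet consistency: the rule picks the Condorcet winner whenever one exists. -/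
def CondorcetConsistent {n m : ℕ} (f : Profile n m → Fin m) : Prop :=
  ∀ (P : Profile n m) (a : Fin m), CondorcetWinner P a → f P = a

/-- `p'` is a monotonic transformation of `p` with respect to `a`: all positions up to
(and including) the position of `a` are unchanged. -/
def MonoTransf {m : ℕ} (p p' : Pref m) (a : Fin m) : Prop :=
  ∀ k : Fin m, k ≤ p.symm a → p k = p' k

/-- Monotonicity: an alternative ranked below the outcome by agent `i` cannot become
the outcome after a monotonic transformation of `i`'s preference w.r.t. the outcome. -/
def MonotoneRule {n m : ℕ} (f : Profile n m → Fin m) : Prop :=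
  ∀ (P : Profile n m) (i : Fin n) (b : Fin m), prefers (P i) (f P) b →
    ∀ Pi' : Pref m, MonoTransf (P i) Pi' (f P) → f (update P i Pi') ≠ b

/-- One pairwise majority contest: the challenger `y` beats the incumbent `c` only if
strictly more agents prefer `y` to `c` (ties go to the incumbent, who always comes
earlier in the fixed order). -/
def duel {n m : ℕ} (P : Profile n m) (c y : Fin m) : Fin m :=
  if numPref P c y < numPref P y c then y else c

/-- Run successive pairwise contests starting from incumbent `c` against the listed
challengers in order. -/
def seRun {n m : ℕ} (P : Profile n m) : Fin m → List (Fin m) → Fin m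
  | c, [] => c
  | c, y :: rest => seRun P (duel P c y) rest

/-- The survivor of successive elimination along a list of alternatives (none if empty). -/
def seWinner? {n m : ℕ} (P : Profile n m) : List (Fin m) → Option (Fin m)
  | [] => none
  | c :: rest => some (seRun P c rest)

/-- A successive elimination rule: there is an enumeration `e 0 ≻ e 1 ≻ ⋯ ≻ e (m-1)` of the
alternatives such that the rule outputs the survivor of the sequential pairwise majority
contests (ties resolved in favour of the `≻`-greater, i.e. earlier, alternative). -/
def SuccElim {n m : ℕ} (f : Profile n m → Fin m) : Prop :=
  ∃ e : Fin m ≃ Fin m, ∀ P : Profile n m,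
    seWinner? P ((List.finRange m).map e) = some (f P)

namespace Stmt6

open Finset

variable {n m : ℕ}

def veto [NeZero m] (P : Profile n m) (y : Fin m) : ℕ :=
  (Finset.univ.filter fun i => (P i).symm y = 0).card

def vetoAway [NeZero m] (P : Profile n m) (i : Fin n) (y : Fin m) : ℕ :=
  (Finset.univ.filter fun j => j ≠ i ∧ (P j).symm y = 0).card

lemma symm_eq_zero_iff [NeZero m] (q : Pref m) (y : Fin m) : q.symm y = 0 ↔ y = q 0 :=
  Equiv.symm_apply_eq q

lemma veto_eq_sum [NeZero m] (P : Profile n m) (y : Fin m) :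
    veto P y = ∑ i, if (P i).symm y = 0 then 1 else 0 := Finset.card_filter _ _

lemma veto_eq_vetoAway [NeZero m] (P : Profile n m) (i : Fin n) (y : Fin m) :
    veto P y = vetoAway P i y + (if (P i).symm y = 0 then 1 else 0) := by
  rw [veto_eq_sum, ← Finset.sum_erase_add _ _ (Finset.mem_univ i)]
  congr 1
  rw [vetoAway, Finset.card_filter, ← Finset.sum_erase_add _ _ (Finset.mem_univ i)]
  simp only [ne_eq, not_true_eq_false, false_and, if_false, add_zero]
  exact Finset.sum_congr rfl fun j hj => by simp [(Finset.mem_erase.mp hj).1]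

lemma vetoAway_update_self [NeZero m] (P : Profile n m) (i : Fin n) (q : Pref m) (y : Fin m) :
    vetoAway (update P i q) i y = vetoAway P i y := by
  unfold vetoAway
  congr 1
  apply Finset.filter_congr
  intro j _
  by_cases h : j = i
  · simp [h]
  · simp [h, update_of_ne h]

lemma veto_update [NeZero m] (P : Profile n m) (i : Fin n) (q : Pref m) (y : Fin m) :
    veto (update P i q) y = vetoAway P i y + (if q.symm y = 0 then 1 else 0) := by
  rw [veto_eq_vetoAway (update P i q) i y, vetoAway_update_self, update_self]

lemma vetoAway_le_veto [NeZero m] (P : Profile n m) (i : Fin n) (y : Fin m) :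
    vetoAway P i y ≤ veto P y := by
  rw [veto_eq_vetoAway P i y]; omega

lemma one_le_veto [NeZero m] {P : Profile n m} {y : Fin m} (j : Fin n)
    (h : (P j).symm y = 0) : 1 ≤ veto P y := by
  have : j ∈ Finset.univ.filter fun i => (P i).symm y = 0 := by simp [h]
  exact Finset.card_pos.mpr ⟨j, this⟩

lemma veto_eq_zero [NeZero m] {P : Profile n m} {y : Fin m}
    (h : ∀ j, (P j).symm y ≠ 0) : veto P y = 0 := by
  rw [veto, Finset.card_eq_zero, Finset.filter_eq_empty_iff]
  exact fun j _ => h j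

lemma vetoAway_eq_zero [NeZero m] {P : Profile n m} {i : Fin n} {y : Fin m}
    (h : ∀ j, j ≠ i → (P j).symm y ≠ 0) : vetoAway P i y = 0 := by
  rw [vetoAway, Finset.card_eq_zero, Finset.filter_eq_empty_iff]
  exact fun j _ hj => h j hj.1 hj.2

lemma sum_veto [NeZero m] (P : Profile n m) : ∑ y, veto P y = n := by
  simp only [veto_eq_sum]
  rw [Finset.sum_comm]
  have : ∀ i : Fin n, (∑ y : Fin m, if (P i).symm y = 0 then 1 else 0) = 1 := by
    intro i
    simp only [Equiv.symm_apply_eq]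
    simp
  simp [this]

lemma score_eq [NeZero m] (s : Fin m → ℝ) (s0 sT : ℝ)
    (hs : ∀ k : Fin m, s k = if k = 0 then s0 else sT) (P : Profile n m) (y : Fin m) :
    score s P y = n * sT - (sT - s0) * (veto P y : ℝ) := by
  have : ∀ i : Fin n, s ((P i).symm y)
      = sT - (sT - s0) * (if (P i).symm y = 0 then (1:ℝ) else 0) := by
    intro i
    rw [hs]
    split <;> ring
  rw [score, Finset.sum_congr rfl fun i _ => this i, Finset.sum_sub_distrib,
    ← Finset.mul_sum, Finset.sum_boole, Finset.sum_const]
  simp [veto, mul_comm]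

lemma mem_scoreSet_iff [NeZero m] (s : Fin m → ℝ) (s0 sT : ℝ) (hlt : s0 < sT)
    (hs : ∀ k : Fin m, s k = if k = 0 then s0 else sT) (P : Profile n m) (y : Fin m) :
    y ∈ ScoreSet s P ↔ ∀ z, veto P y ≤ veto P z := by
  have key : ∀ a b : Fin m, score s P a ≤ score s P b ↔ veto P b ≤ veto P a := by
    intro a b
    rw [score_eq s s0 sT hs, score_eq s s0 sT hs]
    rw [sub_le_sub_iff_left, mul_le_mul_iff_right₀ (by linarith), Nat.cast_le]
  constructor
  · intro h z; exact (key z y).mp (h z)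
  · intro h z; exact (key z y).mpr (h z)

lemma winner_unique {r : Fin m → Fin m → Prop} (hr : IsStrictTotalOrder (Fin m) r)
    {S : Set (Fin m)} {w w' : Fin m} (hw : w ∈ S) (hmax : ∀ y ∈ S, y ≠ w → r w y)
    (hw' : w' ∈ S) (hmax' : ∀ y ∈ S, y ≠ w' → r w' y) : w = w' := by
  haveI := hr
  by_contra h
  exact irrefl_of r w' (trans_of r (hmax' w hw h) (hmax w' hw' (Ne.symm h)))

lemma exists_rmax {α : Type*} (r : α → α → Prop)
    (htr : ∀ a b c, r a b → r b c → r a c)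
    (htri : ∀ a b, a ≠ b → r a b ∨ r b a) :
    ∀ t : Finset α, t.Nonempty → ∃ w ∈ t, ∀ y ∈ t, y ≠ w → r w y := by
  classical
  intro t
  induction t using Finset.induction_on with
  | empty => intro h; exact absurd h (by simp)
  | @insert a t ha ih =>
    intro _
    rcases t.eq_empty_or_nonempty with rfl | hne
    · exact ⟨a, by simp, by simp⟩
    · obtain ⟨w, hw, hmax⟩ := ih hne
      have haw : a ≠ w := fun h => ha (h ▸ hw)
      rcases htri a w haw with h | h
      · refine ⟨a, Finset.mem_insert_self a t, ?_⟩
        intro y hy hya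
        rcases Finset.mem_insert.mp hy with rfl | hyt
        · exact absurd rfl hya
        · by_cases hyw : y = w
          · exact hyw ▸ h
          · exact htr a w y h (hmax y hyt hyw)
      · refine ⟨w, Finset.mem_insert.mpr (Or.inr hw), ?_⟩
        intro y hy hyw
        rcases Finset.mem_insert.mp hy with rfl | hyt
        · exact h
        · exact hmax y hyt hyw

lemma exists_pref_two (hm : 2 ≤ m) (x a : Fin m) (hxa : x ≠ a) :
    ∃ p : Pref m, p ⟨0, by omega⟩ = x ∧ p ⟨1, by omega⟩ = a := by
  set z0 : Fin m := ⟨0, by omega⟩ with hz0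
  set z1 : Fin m := ⟨1, by omega⟩ with hz1
  set c : Pref m := Equiv.swap z0 x with hc
  have h0 : c z0 = x := Equiv.swap_apply_left z0 x
  have h01 : z0 ≠ z1 := by simp [hz0, hz1, Fin.ext_iff]
  have h1x : c z1 ≠ x := by
    rw [← h0]; exact fun h => h01 (c.injective h).symm
  refine ⟨c.trans (Equiv.swap (c z1) a), ?_, ?_⟩
  · show Equiv.swap (c z1) a (c z0) = x
    rw [h0]
    exact Equiv.swap_apply_of_ne_of_ne (Ne.symm h1x) hxa
  · show Equiv.swap (c z1) a (c z1) = a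
    exact Equiv.swap_apply_left _ _

lemma exists_beta (i : Fin n) (B : Finset (Fin m)) (b : Fin m) (hb : b ∈ B)
    (hcard : B.card ≤ (Finset.univ.erase i : Finset (Fin n)).card) :
    ∃ β : Fin n → Fin m, (∀ j, β j ∈ B) ∧ ∀ y ∈ B, ∃ j, j ≠ i ∧ β j = y := by
  classical
  set A : Finset (Fin n) := Finset.univ.erase i with hA
  set φ : ↥B → ↥A := fun u => A.equivFin.symm (Fin.castLE hcard (B.equivFin u)) with hφ
  have hφinj : Function.Injective φ := by
    intro u v h
    exact B.equivFin.injective (Fin.castLE_injective hcard (A.equivFin.symm.injective h))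
  refine ⟨fun j => if h : ∃ u : ↥B, (φ u : Fin n) = j then (h.choose : Fin m) else b, ?_, ?_⟩
  · intro j
    dsimp only
    by_cases h : ∃ u : ↥B, (φ u : Fin n) = j
    · rw [dif_pos h]; exact h.choose.2
    · rw [dif_neg h]; exact hb
  · intro y hy
    refine ⟨φ ⟨y, hy⟩, ?_, ?_⟩
    · exact (Finset.mem_erase.mp (φ ⟨y, hy⟩).2).1
    · have hex : ∃ u : ↥B, (φ u : Fin n) = (φ ⟨y, hy⟩ : Fin n) := ⟨⟨y, hy⟩, rfl⟩
      dsimp only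
      rw [dif_pos hex]
      have : hex.choose = ⟨y, hy⟩ := hφinj (Subtype.ext hex.choose_spec)
      rw [this]

end Stmt6

/-- An A-scoring rule whose scores satisfy s₁ < s₂ = ⋯ = s_m (k* = 1, i.e.
an A-negative-plurality rule) is regret-free truth-telling if and only if n ≥ m − 1. -/
theorem stmt_6 (n m : ℕ) (hn : 2 ≤ n) (hm : 2 ≤ m) (s : Fin m → ℝ)
    (hmono : Monotone s)
    (h1 : s ⟨0, by omega⟩ < s ⟨1, by omega⟩)
    (hconst : ∀ j : Fin m, 1 ≤ (j : ℕ) → s j = s ⟨m - 1, by omega⟩)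
    (f : Profile n m → Fin m) (hf : AScoring s f) :
    RFTT f ↔ m - 1 ≤ n := by
  classical
  haveI : NeZero m := ⟨by omega⟩
  obtain ⟨r, hr, hfp⟩ := hf
  haveI := hr
  have h0eq : (0 : Fin m) = ⟨0, by omega⟩ := by ext; simp
  have hs : ∀ k : Fin m, s k = if k = 0 then s ⟨0, by omega⟩ else s ⟨m - 1, by omega⟩ := by
    intro k
    by_cases h : k = 0
    · rw [if_pos h, h, h0eq]
    · rw [if_neg h]
      refine hconst k ?_
      have : (k : ℕ) ≠ 0 := fun hc => h (by ext; simpa using hc)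
      omega
  have hlt : s ⟨0, by omega⟩ < s ⟨m - 1, by omega⟩ := by
    have h2 := hconst ⟨1, by omega⟩ (by simp)
    rw [← h2]; exact h1
  have SSiff : ∀ (P : Profile n m) (y : Fin m),
      y ∈ ScoreSet s P ↔ ∀ z, Stmt6.veto P y ≤ Stmt6.veto P z :=
    fun P y => Stmt6.mem_scoreSet_iff s _ _ hlt hs P y
  have feq : ∀ (P : Profile n m) (w : Fin m), (∀ z, Stmt6.veto P w ≤ Stmt6.veto P z) →
      (∀ y, (∀ z, Stmt6.veto P y ≤ Stmt6.veto P z) → y ≠ w → r w y) → f P = w := by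
    intro P w hw hmax
    exact (Stmt6.winner_unique hr ((SSiff P w).mpr hw)
      (fun y hy hyw => hmax y ((SSiff P y).mp hy) hyw) (hfp P).1 (hfp P).2).symm
  have htr : ∀ a b c : Fin m, r a b → r b c → r a c := fun a b c => trans_of r
  have hirr : ∀ a : Fin m, ¬ r a a := fun a => irrefl_of r a
  have htri : ∀ a b : Fin m, a ≠ b → r a b ∨ r b a := by
    intro a b hab
    rcases trichotomous_of r a b with h | h | h
    exacts [Or.inl h, absurd h hab, Or.inr h]
  constructor
  · -- RFTT → m - 1 ≤ n
    intro hR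
    by_contra hno
    have hm2 : n + 2 ≤ m := by omega
    obtain ⟨x, -, hxmin⟩ := Stmt6.exists_rmax (fun a b => r b a)
      (fun a b c hab hbc => htr c b a hbc hab)
      (fun a b hab => htri b a (Ne.symm hab)) Finset.univ ⟨0, Finset.mem_univ _⟩
    have hane : (Finset.univ.erase x : Finset (Fin m)).Nonempty := by
      rw [← Finset.card_pos, Finset.card_erase_of_mem (Finset.mem_univ x),
        Finset.card_univ, Fintype.card_fin]
      omega
    obtain ⟨a, haMem, hamax⟩ := Stmt6.exists_rmax r htr htri (Finset.univ.erase x) hane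
    have hax : a ≠ x := (Finset.mem_erase.mp haMem).1
    obtain ⟨p, hp0, hp1⟩ := Stmt6.exists_pref_two hm x a (Ne.symm hax)
    have hp0' : p 0 = x := by rw [h0eq]; exact hp0
    have hpsx : p.symm x = 0 := (Stmt6.symm_eq_zero_iff p x).mpr hp0'.symm
    have hpsa : p.symm a = ⟨1, by omega⟩ := (Equiv.symm_apply_eq p).mpr hp1.symm
    set i : Fin n := ⟨0, by omega⟩ with hidef
    set P : Profile n m := fun _ => p with hP
    set Pi' : Pref m := Equiv.swap 0 a with hPi'
    have hPi'0 : Pi' 0 = a := Equiv.swap_apply_left _ _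
    -- veto computations for P
    have hvP0 : ∀ y : Fin m, y ≠ x → Stmt6.veto P y = 0 := by
      intro y hy
      apply Stmt6.veto_eq_zero
      intro j h
      rw [Stmt6.symm_eq_zero_iff] at h
      exact hy (h.trans hp0')
    have hvPx : 1 ≤ Stmt6.veto P x :=
      Stmt6.one_le_veto i ((Stmt6.symm_eq_zero_iff p x).mpr hp0'.symm)
    have hfPa : f P = a := by
      apply feq
      · intro z
        rw [hvP0 a hax]
        exact Nat.zero_le _
      · intro y hy hya
        have hyx : y ≠ x := by
          intro h
          have := hy a
          rw [hvP0 a hax] at this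
          rw [h] at this
          omega
        exact hamax y (Finset.mem_erase.mpr ⟨hyx, Finset.mem_univ _⟩) hya
    -- veto computations for P' = update P i Pi'
    set P' : Profile n m := update P i Pi' with hP'def
    have hj1 : (⟨1, by omega⟩ : Fin n) ≠ i := by simp [hidef, Fin.ext_iff]
    have hvP'x : 1 ≤ Stmt6.veto P' x := by
      refine Stmt6.one_le_veto ⟨1, by omega⟩ ?_
      rw [hP'def, update_of_ne hj1]
      exact (Stmt6.symm_eq_zero_iff p x).mpr hp0'.symm
    have hvP'a : 1 ≤ Stmt6.veto P' a := by
      refine Stmt6.one_le_veto i ?_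
      rw [hP'def, update_self]
      exact (Stmt6.symm_eq_zero_iff Pi' a).mpr hPi'0.symm
    have hvP'0 : ∀ y : Fin m, y ≠ x → y ≠ a → Stmt6.veto P' y = 0 := by
      intro y hyx hya
      apply Stmt6.veto_eq_zero
      intro j h
      rw [Stmt6.symm_eq_zero_iff] at h
      by_cases hji : j = i
      · rw [hji, hP'def, update_self, hPi'0] at h
        exact hya h
      · rw [hP'def, update_of_ne hji] at h
        exact hyx (h.trans hp0')
    have hCne : ((Finset.univ.erase x).erase a : Finset (Fin m)).Nonempty := by
      rw [← Finset.card_pos, Finset.card_erase_of_mem haMem,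
        Finset.card_erase_of_mem (Finset.mem_univ x), Finset.card_univ, Fintype.card_fin]
      omega
    obtain ⟨b, hbC, hbmax⟩ := Stmt6.exists_rmax r htr htri _ hCne
    have hba : b ≠ a := (Finset.mem_erase.mp hbC).1
    have hbx : b ≠ x := (Finset.mem_erase.mp (Finset.mem_erase.mp hbC).2).1
    have hfP'b : f P' = b := by
      apply feq
      · intro z
        rw [hvP'0 b hbx hba]
        exact Nat.zero_le _
      · intro y hy hyb
        have hyx : y ≠ x := by
          intro h
          have := hy b
          rw [hvP'0 b hbx hba, h] at this
          omega
        have hya : y ≠ a := by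
          intro h
          have := hy b
          rw [hvP'0 b hbx hba, h] at this
          omega
        exact hbmax y (Finset.mem_erase.mpr ⟨hya,
          Finset.mem_erase.mpr ⟨hyx, Finset.mem_univ _⟩⟩) hyb
    have himp : prefers (P i) (f (update P i Pi')) (f P) := by
      show (P i).symm (f P) < (P i).symm (f (update P i Pi'))
      rw [hfPa]
      rw [show f (update P i Pi') = b from hfP'b]
      show p.symm a < p.symm b
      rw [hpsa]
      have hb0 : p.symm b ≠ 0 := by
        intro h
        exact hbx ((Stmt6.symm_eq_zero_iff p b).mp h |>.trans hp0')
      have hb1 : p.symm b ≠ ⟨1, by omega⟩ := by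
        intro h
        exact hba (by rw [(Equiv.symm_apply_eq p).mp h, hp1])
      rw [Fin.lt_def]
      have hv0 : (p.symm b : ℕ) ≠ 0 := fun h => hb0 (by ext; simpa using h)
      have hv1 : (p.symm b : ℕ) ≠ 1 := fun h => hb1 (by ext; simpa using h)
      show (1 : ℕ) < (p.symm b : ℕ)
      omega
    obtain ⟨Ps, hPsi, hPsf, hPspref⟩ := hR i P Pi' himp
    rw [hfPa] at hPsf
    set Q : Profile n m := update Ps i Pi' with hQdef
    set w : Fin m := f Q with hwdef
    -- count zeros at Ps
    have hvza : ∀ z, Stmt6.veto Ps a ≤ Stmt6.veto Ps z := by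
      have h := (hfp Ps).1
      rw [hPsf] at h
      exact (SSiff Ps a).mp h
    have hNcard : (Finset.univ.filter fun y : Fin m => ¬ Stmt6.veto Ps y = 0).card ≤ n := by
      calc (Finset.univ.filter fun y : Fin m => ¬ Stmt6.veto Ps y = 0).card
          = ∑ y ∈ (Finset.univ.filter fun y : Fin m => ¬ Stmt6.veto Ps y = 0), 1 :=
            Finset.card_eq_sum_ones _
        _ ≤ ∑ y ∈ (Finset.univ.filter fun y : Fin m => ¬ Stmt6.veto Ps y = 0),
              Stmt6.veto Ps y := by
            refine Finset.sum_le_sum ?_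
            intro y hy
            have := (Finset.mem_filter.mp hy).2
            omega
        _ ≤ ∑ y : Fin m, Stmt6.veto Ps y :=
            Finset.sum_le_sum_of_subset (Finset.filter_subset _ _)
        _ = n := Stmt6.sum_veto Ps
    have hZcard : 2 ≤ (Finset.univ.filter fun y : Fin m => Stmt6.veto Ps y = 0).card := by
      have h := Finset.card_filter_add_card_filter_not
        (s := (Finset.univ : Finset (Fin m))) (p := fun y => Stmt6.veto Ps y = 0)
      rw [Finset.card_univ, Fintype.card_fin] at h
      omega
    have hZane : (((Finset.univ.filter fun y : Fin m => Stmt6.veto Ps y = 0)).erase a).Nonempty := by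
      rw [← Finset.card_pos]
      have := Finset.pred_card_le_card_erase
        (s := Finset.univ.filter fun y : Fin m => Stmt6.veto Ps y = 0) (a := a)
      omega
    obtain ⟨z, hz⟩ := hZane
    have hza : z ≠ a := (Finset.mem_erase.mp hz).1
    have hvz : Stmt6.veto Ps z = 0 :=
      (Finset.mem_filter.mp (Finset.mem_erase.mp hz).2).2
    have hvPsx : 1 ≤ Stmt6.veto Ps x := by
      refine Stmt6.one_le_veto i ?_
      rw [hPsi]
      exact (Stmt6.symm_eq_zero_iff p x).mpr hp0'.symm
    have hzx : z ≠ x := by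
      intro h
      rw [h] at hvz
      omega
    -- veto at Q
    have hQz : Stmt6.veto Q z = 0 := by
      rw [hQdef, Stmt6.veto_update]
      have h1 : Stmt6.vetoAway Ps i z ≤ Stmt6.veto Ps z := Stmt6.vetoAway_le_veto Ps i z
      rw [if_neg (fun h => hza ((Stmt6.symm_eq_zero_iff Pi' z).mp h |>.trans hPi'0))]
      omega
    have hQa : 1 ≤ Stmt6.veto Q a := by
      rw [hQdef, Stmt6.veto_update,
        if_pos ((Stmt6.symm_eq_zero_iff Pi' a).mpr hPi'0.symm)]
      omega
    have hw0 : Stmt6.veto Q w ≤ 0 := by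
      have h := (SSiff Q w).mp (hfp Q).1
      rw [← hQz]
      exact h z
    have hwa : w ≠ a := by
      intro h
      rw [h] at hw0
      omega
    have hwx : w ≠ x := by
      intro h
      have hzSS : z ∈ ScoreSet s Q := (SSiff Q z).mpr (fun y => by rw [hQz]; exact Nat.zero_le _)
      have hrwz : r w z := (hfp Q).2 z hzSS (fun he => hzx (he ▸ h))
      have hrzw : r z w := by
        rw [h]
        exact hxmin z (Finset.mem_univ z) hzx
      exact hirr w (htr w z w hrwz hrzw)
    -- contradiction with hPspref
    have hlt' : p.symm w < p.symm a := by
      rw [hPsf] at hPspref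
      exact hPspref
    rw [hpsa] at hlt'
    have hvw : (p.symm w : ℕ) < 1 := hlt'
    have hvw0 : (p.symm w : ℕ) = 0 := by omega
    have hpw : p.symm w = 0 := Fin.ext (by rw [hvw0, Fin.val_zero])
    exact hwx ((Stmt6.symm_eq_zero_iff p w).mp hpw |>.trans hp0')
  · -- m - 1 ≤ n → RFTT
    intro hnm
    intro i P Pi' himp
    set a : Fin m := f P with hadef
    set P' : Profile n m := update P i Pi' with hP'def
    set b : Fin m := f P' with hbdef
    have himp' : (P i).symm a < (P i).symm b := himp
    have hba : b ≠ a := by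
      intro h
      rw [h] at himp'
      exact lt_irrefl _ himp'
    have hbx : b ≠ P i 0 := by
      intro h
      have h0 : (P i).symm (P i 0) = 0 := (Stmt6.symm_eq_zero_iff (P i) _).mpr rfl
      rw [h, h0] at himp'
      rw [Fin.lt_def, Fin.val_zero] at himp'
      exact Nat.not_lt_zero _ himp'
    have hA : ∀ z, Stmt6.veto P a ≤ Stmt6.veto P z := (SSiff P a).mp (hfp P).1
    have hB : ∀ z, Stmt6.veto P' b ≤ Stmt6.veto P' z := (SSiff P' b).mp (hfp P').1
    have hvP : ∀ y, Stmt6.veto P y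
        = Stmt6.vetoAway P i y + (if y = P i 0 then 1 else 0) := by
      intro y
      rw [Stmt6.veto_eq_vetoAway P i y]
      simp only [Stmt6.symm_eq_zero_iff]
    have hvP' : ∀ y, Stmt6.veto P' y
        = Stmt6.vetoAway P i y + (if y = Pi' 0 then 1 else 0) := by
      intro y
      rw [hP'def, Stmt6.veto_update]
      simp only [Stmt6.symm_eq_zero_iff]
    have hxx' : P i 0 ≠ Pi' 0 := by
      intro he
      have hvsame : ∀ y, Stmt6.veto P' y = Stmt6.veto P y := fun y => by
        rw [hvP, hvP', he]
      have hbSS : b ∈ ScoreSet s P := (SSiff P b).mpr (fun z => by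
        rw [← hvsame, ← hvsame]; exact hB z)
      have hbmax' : ∀ y ∈ ScoreSet s P, y ≠ b → r b y := fun y hy hyb =>
        (hfp P').2 y ((SSiff P' y).mpr (fun z => by
          rw [hvsame, hvsame]; exact (SSiff P y).mp hy z)) hyb
      exact hba (Stmt6.winner_unique hr hbSS hbmax' (hfp P).1 (hfp P).2)
    have hx'a : Pi' 0 = a := by
      by_contra hne
      have e1 := hB a
      have e2 := hA b
      rw [hvP', hvP', if_neg (fun h : a = Pi' 0 => hne h.symm)] at e1
      rw [hvP, hvP, if_neg hbx] at e2
      have hvb_eq : Stmt6.veto P b = Stmt6.veto P a := by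
        rw [hvP, hvP, if_neg hbx]
        split_ifs at e1 e2 ⊢ <;> omega
      have hva'_eq : Stmt6.veto P' a = Stmt6.veto P' b := by
        rw [hvP', hvP', if_neg (fun h : a = Pi' 0 => hne h.symm)]
        split_ifs at e1 e2 ⊢ <;> omega
      have hbSS : b ∈ ScoreSet s P := (SSiff P b).mpr (fun z => hvb_eq ▸ hA z)
      have hrab : r a b := (hfp P).2 b hbSS hba
      have haSS : a ∈ ScoreSet s P' := (SSiff P' a).mpr (fun z => hva'_eq ▸ hB z)
      have hrba : r b a := (hfp P').2 a haSS (Ne.symm hba)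
      exact irrefl_of r a (trans_of r hrab hrba)
    have hax : a ≠ P i 0 := fun h => hxx' (by rw [hx'a, h])
    -- construction of Pstar
    set B : Finset (Fin m) := (Finset.univ.erase a).erase (P i 0) with hBdef
    have hbB : b ∈ B := Finset.mem_erase.mpr ⟨hbx,
      Finset.mem_erase.mpr ⟨hba, Finset.mem_univ _⟩⟩
    have hBcard : B.card ≤ (Finset.univ.erase i : Finset (Fin n)).card := by
      rw [hBdef, Finset.card_erase_of_mem
          (Finset.mem_erase.mpr ⟨Ne.symm hax, Finset.mem_univ _⟩),
        Finset.card_erase_of_mem (Finset.mem_univ a),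
        Finset.card_erase_of_mem (Finset.mem_univ i),
        Finset.card_univ, Finset.card_univ, Fintype.card_fin, Fintype.card_fin]
      omega
    obtain ⟨β, hβB, hβsurj⟩ := Stmt6.exists_beta i B b hbB hBcard
    set Ps : Profile n m := fun j => if j = i then P i else Equiv.swap 0 (β j) with hPsdef
    have hPsi : Ps i = P i := if_pos rfl
    have hPsj : ∀ j, j ≠ i → Ps j 0 = β j := by
      intro j h
      show (if j = i then P i else Equiv.swap 0 (β j)) 0 = β j
      rw [if_neg h]
      exact Equiv.swap_apply_left _ _
    -- vetoes at Ps
    have hnotB_a : a ∉ B := by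
      intro h
      exact (Finset.mem_erase.mp (Finset.mem_erase.mp h).2).1 rfl
    have hnotB_x : P i 0 ∉ B := by
      intro h
      exact (Finset.mem_erase.mp h).1 rfl
    have hvPsa : Stmt6.veto Ps a = 0 := by
      apply Stmt6.veto_eq_zero
      intro j h
      rw [Stmt6.symm_eq_zero_iff] at h
      by_cases hji : j = i
      · rw [hji, hPsi] at h
        exact hax h
      · rw [hPsj j hji] at h
        exact hnotB_a (h ▸ hβB j)
    have hvPsx : 1 ≤ Stmt6.veto Ps (P i 0) := by
      refine Stmt6.one_le_veto i ?_
      rw [hPsi]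
      exact (Stmt6.symm_eq_zero_iff (P i) _).mpr rfl
    have hvPsB : ∀ y ∈ B, 1 ≤ Stmt6.veto Ps y := by
      intro y hy
      obtain ⟨j, hji, hjy⟩ := hβsurj y hy
      refine Stmt6.one_le_veto j ?_
      rw [Stmt6.symm_eq_zero_iff, hPsj j hji]
      exact hjy.symm
    have hclass : ∀ y : Fin m, y = a ∨ y = P i 0 ∨ y ∈ B := by
      intro y
      by_cases h1 : y = a
      · exact Or.inl h1
      by_cases h2 : y = P i 0
      · exact Or.inr (Or.inl h2)
      exact Or.inr (Or.inr (Finset.mem_erase.mpr ⟨h2,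
        Finset.mem_erase.mpr ⟨h1, Finset.mem_univ _⟩⟩))
    have hfPs : f Ps = a := by
      apply feq
      · intro z
        rw [hvPsa]
        exact Nat.zero_le _
      · intro y hy hya
        exfalso
        have hy' := hy a
        rw [hvPsa] at hy'
        rcases hclass y with h | h | h
        · exact hya h
        · rw [h] at hy'; omega
        · have := hvPsB y h; omega
    -- vetoes at Qs = update Ps i Pi'
    set Qs : Profile n m := update Ps i Pi' with hQsdef
    have hvQs : ∀ y, Stmt6.veto Qs y
        = Stmt6.vetoAway Ps i y + (if y = Pi' 0 then 1 else 0) := by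
      intro y
      rw [hQsdef, Stmt6.veto_update]
      simp only [Stmt6.symm_eq_zero_iff]
    have hvQsx : Stmt6.veto Qs (P i 0) = 0 := by
      rw [hvQs, if_neg hxx']
      have : Stmt6.vetoAway Ps i (P i 0) = 0 := by
        apply Stmt6.vetoAway_eq_zero
        intro j hji h
        rw [Stmt6.symm_eq_zero_iff, hPsj j hji] at h
        exact hnotB_x (h ▸ hβB j)
      omega
    have hvQsa : 1 ≤ Stmt6.veto Qs a := by
      rw [hvQs, if_pos hx'a.symm]
      omega
    have hvQsB : ∀ y ∈ B, 1 ≤ Stmt6.veto Qs y := by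
      intro y hy
      obtain ⟨j, hji, hjy⟩ := hβsurj y hy
      refine Stmt6.one_le_veto j ?_
      rw [Stmt6.symm_eq_zero_iff, hQsdef, update_of_ne hji, hPsj j hji]
      exact hjy.symm
    have hfQs : f Qs = P i 0 := by
      apply feq
      · intro z
        rw [hvQsx]
        exact Nat.zero_le _
      · intro y hy hyx
        exfalso
        have hy' := hy (P i 0)
        rw [hvQsx] at hy'
        rcases hclass y with h | h | h
        · rw [h] at hy'; omega
        · exact hyx h
        · have := hvQsB y h; omega
    refine ⟨Ps, hPsi, ?_, ?_⟩
    · rw [hfPs, hadef]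
    · show (P i).symm (f Qs) < (P i).symm (f Ps)
      rw [hfPs, hfQs]
      have h0 : (P i).symm (P i 0) = 0 := (Stmt6.symm_eq_zero_iff (P i) _).mpr rfl
      rw [h0, Fin.lt_def]
      have : ((P i).symm a : ℕ) ≠ 0 := by
        intro h
        exact hax ((Stmt6.symm_eq_zero_iff (P i) a).mp (by ext; simpa using h))
      have h0v : ((P i).symm (P i 0) : ℕ) = 0 := by simp
      have hz0 : ((0 : Fin m) : ℕ) = 0 := by simp
      omega
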